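/- Let d ≥ 1, ε > 0, λ ∈ ℝ, and let the components of A : ℝ^d → ℝ^d be of class C^∞_pol. Then for every f ∈ S(ℝ^{2d}) and all φ, ψ ∈ S(ℝ^d): ∫_{ℝ^d} conj(φ(x)) (Op^A_{ε,λ}(f)ψ)(x) dx = (2πε)^{-d} ∫_{ℝ^{2d}} f(X) W^A_{ε,λ}(φ,ψ)(X) dX, all integrals being absolutely convergent. -/

import Mathlib

noncomputable section
open MeasureTheory Complex

/-- `ℝ^d` -/
abbrev Vd (d : ℕ) := Fin d → ℝ

/-- Euclidean dot product. -/
def dotR {d : ℕ} (x y : Vd d) : ℝ := ∑ l, x l * y l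

/-- Circulation `Γ^A([u,v]) = Σ_l (v_l - u_l) ∫_0^1 A_l(u + s(v-u)) ds`. -/
def circA {d : ℕ} (A : Vd d → Vd d) (u v : Vd d) : ℝ :=
  ∑ l, (v l - u l) * ∫ s in (0:ℝ)..1, A (u + s • (v - u)) l

/-- The `ε`-scaled circulation `Γ^A_ε([u,v]) := (1/ε) Γ^A([εu,εv])`. -/
def circAe {d : ℕ} (ε : ℝ) (A : Vd d → Vd d) (u v : Vd d) : ℝ :=
  ε⁻¹ * circA A (ε • u) (ε • v)

/-- A function is of class `C^∞_pol` if it is smooth and it together with all its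
derivatives is polynomially bounded. -/
def CPol {E F : Type*} [NormedAddCommGroup E] [NormedSpace ℝ E]
    [NormedAddCommGroup F] [NormedSpace ℝ F] (f : E → F) : Prop :=
  ContDiff ℝ (⊤ : ℕ∞) f ∧
    ∀ n : ℕ, ∃ (C : ℝ) (k : ℕ), ∀ x, ‖iteratedFDeriv ℝ n f x‖ ≤ C * (1 + ‖x‖) ^ k

/-- Magnetic Weyl quantization in the adiabatic scaling:
`(Op^A_{ε,λ}(f)φ)(x) = (2π)^{-d} ∫∫ e^{-i(y-x)·η} e^{-iλΓ^A_ε([x,y])} f((ε/2)(x+y),η) φ(y) dy dη`. -/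
def mOp {d : ℕ} (ε lam : ℝ) (A : Vd d → Vd d) (f : Vd d × Vd d → ℂ)
    (φ : Vd d → ℂ) (x : Vd d) : ℂ :=
  (((2 * Real.pi) ^ d)⁻¹ : ℝ) * ∫ y : Vd d, ∫ η : Vd d,
    Complex.exp (-Complex.I * dotR (y - x) η) *
      Complex.exp (-Complex.I * lam * circAe ε A x y) *
      f ((ε / 2) • (x + y), η) * φ y

/-- The magnetic Wigner transform `W^A_{ε,λ}(φ,ψ)`. -/
def mWig {d : ℕ} (ε lam : ℝ) (A : Vd d → Vd d) (φ ψ : Vd d → ℂ)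
    (X : Vd d × Vd d) : ℂ :=
  ∫ y : Vd d,
    Complex.exp (-Complex.I * dotR y X.2) *
      Complex.exp (-Complex.I * lam *
        circAe ε A (ε⁻¹ • X.1 - (2:ℝ)⁻¹ • y) (ε⁻¹ • X.1 + (2:ℝ)⁻¹ • y)) *
      (starRingEnd ℂ) (φ (ε⁻¹ • X.1 - (2:ℝ)⁻¹ • y)) * ψ (ε⁻¹ • X.1 + (2:ℝ)⁻¹ • y)

namespace St5

variable {d : ℕ}

lemma cont_dotR : Continuous fun z : Vd d × Vd d => dotR z.1 z.2 := by
  unfold dotR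
  exact continuous_finset_sum _ fun l _ =>
    ((continuous_apply l).comp continuous_fst).mul ((continuous_apply l).comp continuous_snd)

lemma cont_circA {A : Vd d → Vd d} (hA : Continuous A) :
    Continuous fun z : Vd d × Vd d => circA A z.1 z.2 := by
  unfold circA
  refine continuous_finset_sum _ fun l _ => (Continuous.sub ?_ ?_).mul ?_
  · exact (continuous_apply l).comp continuous_snd
  · exact (continuous_apply l).comp continuous_fst
  · refine intervalIntegral.continuous_parametric_intervalIntegral_of_continuous'
      (f := fun (z : Vd d × Vd d) (s : ℝ) => A (z.1 + s • (z.2 - z.1)) l) ?_ 0 1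
    have : Continuous fun p : (Vd d × Vd d) × ℝ => A (p.1.1 + p.2 • (p.1.2 - p.1.1)) l :=
      (continuous_apply l).comp <| hA.comp <| by fun_prop
    exact this

lemma cont_circAe {A : Vd d → Vd d} (hA : Continuous A) (ε : ℝ) :
    Continuous fun z : Vd d × Vd d => circAe ε A z.1 z.2 := by
  unfold circAe
  refine continuous_const.mul ?_
  have h2 : Continuous fun z : Vd d × Vd d => (ε • z.1, ε • z.2) := by fun_prop
  simpa [Function.comp_def] using Continuous.comp (g := fun z : Vd d × Vd d => circA A z.1 z.2)
    (cont_circA hA) h2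

lemma norm_exp_neg_I_mul (r : ℝ) : ‖Complex.exp (-Complex.I * r)‖ = 1 := by
  rw [Complex.norm_exp]; simp

lemma schwartz_decay' {E : Type*} [NormedAddCommGroup E] [NormedSpace ℝ E]
    (f : SchwartzMap E ℂ) (k : ℕ) :
    ∃ C : ℝ, 0 ≤ C ∧ ∀ x, ‖f x‖ ≤ C * ((1 + ‖x‖) ^ k)⁻¹ := by
  refine ⟨2 ^ k * ((Finset.Iic (k, 0)).sup fun m => SchwartzMap.seminorm ℝ m.1 m.2) f, ?_, ?_⟩
  · positivity
  · intro x
    have h := SchwartzMap.one_add_le_sup_seminorm_apply (𝕜 := ℝ) (m := (k, 0)) le_rfl le_rfl f x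
    rw [norm_iteratedFDeriv_zero] at h
    have hpos : (0:ℝ) < (1 + ‖x‖) ^ k := by positivity
    simp only [] at h
    rw [← div_eq_mul_inv]
    exact (le_div_iff₀ hpos).2 (by nlinarith [h])

lemma integrable_pw {k : ℕ} (hk : d < k) :
    Integrable (fun v : Vd d => ((1 + ‖v‖) ^ k)⁻¹) := by
  have h := integrable_one_add_norm (E := Vd d) (μ := volume) (r := k)
    (by rw [Module.finrank_fin_fun]; exact_mod_cast hk)
  refine h.congr (Filter.Eventually.of_forall fun x => ?_)
  simp only []
  rw [Real.rpow_neg (by positivity), Real.rpow_natCast]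

lemma pw_le_one (v : Vd d) (k : ℕ) : ((1 + ‖v‖) ^ k)⁻¹ ≤ 1 :=
  inv_le_one_of_one_le₀ (one_le_pow₀ (by linarith [norm_nonneg v]))

lemma pw_mono {k k' : ℕ} (h : k ≤ k') (v : Vd d) :
    ((1 + ‖v‖) ^ k')⁻¹ ≤ ((1 + ‖v‖) ^ k)⁻¹ :=
  inv_anti₀ (by positivity) (pow_le_pow_right₀ (by linarith [norm_nonneg v]) h)

lemma pair_bound (a b : Vd d) (k : ℕ) (w : Vd d) (hw : ‖w‖ ≤ ‖a‖ + ‖b‖) :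
    ((1 + ‖a‖) ^ k)⁻¹ * ((1 + ‖b‖) ^ k)⁻¹ ≤ ((1 + ‖w‖) ^ k)⁻¹ := by
  rw [← mul_inv, ← mul_pow]
  refine inv_anti₀ (by positivity) (pow_le_pow_left₀ (by positivity) ?_ k)
  nlinarith [norm_nonneg a, norm_nonneg b, norm_nonneg w]

lemma two_point (a b : Vd d) (k : ℕ) (w₁ w₂ : Vd d)
    (h1 : ‖w₁‖ ≤ ‖a‖ + ‖b‖) (h2 : ‖w₂‖ ≤ ‖a‖ + ‖b‖) :
    ((1 + ‖a‖) ^ (2 * k))⁻¹ * ((1 + ‖b‖) ^ (2 * k))⁻¹ ≤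
      ((1 + ‖w₁‖) ^ k)⁻¹ * ((1 + ‖w₂‖) ^ k)⁻¹ := by
  have e : ∀ v : Vd d, ((1 + ‖v‖) ^ (2 * k))⁻¹ = ((1 + ‖v‖) ^ k)⁻¹ * ((1 + ‖v‖) ^ k)⁻¹ := by
    intro v; rw [two_mul, pow_add, mul_inv]
  rw [e, e]
  calc ((1 + ‖a‖) ^ k)⁻¹ * ((1 + ‖a‖) ^ k)⁻¹ * (((1 + ‖b‖) ^ k)⁻¹ * ((1 + ‖b‖) ^ k)⁻¹)
      = (((1 + ‖a‖) ^ k)⁻¹ * ((1 + ‖b‖) ^ k)⁻¹) * (((1 + ‖a‖) ^ k)⁻¹ * ((1 + ‖b‖) ^ k)⁻¹) := by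
        ring
  _ ≤ ((1 + ‖w₁‖) ^ k)⁻¹ * ((1 + ‖w₂‖) ^ k)⁻¹ :=
      mul_le_mul (pair_bound a b k w₁ h1) (pair_bound a b k w₂ h2) (by positivity) (by positivity)

lemma scale_bound {k : ℕ} {ε : ℝ} (hε : 0 < ε) (q : Vd d) :
    ((1 + ‖(2 * ε⁻¹) • q‖) ^ k)⁻¹ ≤ (max 1 (ε / 2)) ^ k * ((1 + ‖q‖) ^ k)⁻¹ := by
  have hns : ‖(2 * ε⁻¹) • q‖ = 2 * ε⁻¹ * ‖q‖ := by
    rw [norm_smul, Real.norm_eq_abs, abs_of_pos (by positivity)]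
  have hkey : 1 + ‖q‖ ≤ (max 1 (ε / 2)) * (1 + 2 * ε⁻¹ * ‖q‖) := by
    rcases le_total ε 2 with h | h
    · have h1 : ε * (2 * ε⁻¹) = 2 := by field_simp
      have h2 : (1:ℝ) ≤ 2 * ε⁻¹ := by nlinarith
      calc 1 + ‖q‖ ≤ 1 * (1 + 2 * ε⁻¹ * ‖q‖) := by nlinarith [norm_nonneg q]
      _ ≤ (max 1 (ε / 2)) * (1 + 2 * ε⁻¹ * ‖q‖) :=
          mul_le_mul_of_nonneg_right (le_max_left _ _) (by positivity)
    · have hm : max 1 (ε / 2) = ε / 2 := max_eq_right (by linarith)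
      have h1 : ε * ε⁻¹ = 1 := mul_inv_cancel₀ (by positivity)
      rw [hm]; nlinarith [norm_nonneg q]
  have hpos : (0:ℝ) < (1 + 2 * ε⁻¹ * ‖q‖) ^ k := by positivity
  have hq : (0:ℝ) < (1 + ‖q‖) ^ k := by positivity
  have hkey2 : (1 + ‖q‖) ^ k ≤ (max 1 (ε / 2)) ^ k * (1 + 2 * ε⁻¹ * ‖q‖) ^ k := by
    calc (1 + ‖q‖) ^ k ≤ ((max 1 (ε / 2)) * (1 + 2 * ε⁻¹ * ‖q‖)) ^ k :=
        pow_le_pow_left₀ (by positivity) hkey k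
    _ = _ := mul_pow _ _ _
  rw [hns]
  have hfin : ((1 + 2 * ε⁻¹ * ‖q‖) ^ k)⁻¹ * (1 + ‖q‖) ^ k ≤ (max 1 (ε / 2)) ^ k := by
    calc ((1 + 2 * ε⁻¹ * ‖q‖) ^ k)⁻¹ * (1 + ‖q‖) ^ k
      ≤ ((1 + 2 * ε⁻¹ * ‖q‖) ^ k)⁻¹ * ((max 1 (ε / 2)) ^ k * (1 + 2 * ε⁻¹ * ‖q‖) ^ k) :=
        mul_le_mul_of_nonneg_left hkey2 (by positivity)
    _ = (max 1 (ε / 2)) ^ k := by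
        rw [mul_comm ((max 1 (ε / 2)) ^ k) _, ← mul_assoc, inv_mul_cancel₀ hpos.ne', one_mul]
  have hres := (le_div_iff₀ hq).2 hfin
  rwa [div_eq_mul_inv] at hres

/-- The common integrand. -/
def coreF (ε lam : ℝ) (A : Vd d → Vd d) (f : Vd d × Vd d → ℂ) (φ ψ : Vd d → ℂ)
    (x y η : Vd d) : ℂ :=
  Complex.exp (-Complex.I * dotR (y - x) η) *
    Complex.exp (-Complex.I * lam * circAe ε A x y) *
    f ((ε / 2) • (x + y), η) * (starRingEnd ℂ) (φ x) * ψ y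

lemma norm_coreF (ε lam : ℝ) (A : Vd d → Vd d) (f : Vd d × Vd d → ℂ) (φ ψ : Vd d → ℂ)
    (x y η : Vd d) :
    ‖coreF ε lam A f φ ψ x y η‖ = ‖f ((ε / 2) • (x + y), η)‖ * ‖φ x‖ * ‖ψ y‖ := by
  have h2 : -Complex.I * lam * circAe ε A x y
      = -Complex.I * ((lam * circAe ε A x y : ℝ) : ℂ) := by push_cast; ring
  rw [coreF, h2, norm_mul, norm_mul, norm_mul, norm_mul, norm_exp_neg_I_mul,
    norm_exp_neg_I_mul, RCLike.norm_conj, one_mul, one_mul]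

lemma cont_coreF {ε lam : ℝ} {A : Vd d → Vd d} {f : Vd d × Vd d → ℂ} {φ ψ : Vd d → ℂ}
    (hA : Continuous A) (hf : Continuous f) (hφ : Continuous φ) (hψ : Continuous ψ) :
    Continuous fun w : Vd d × Vd d × Vd d => coreF ε lam A f φ ψ w.1 w.2.1 w.2.2 := by
  unfold coreF
  have h1 : Continuous fun w : Vd d × Vd d × Vd d => dotR (w.2.1 - w.1) w.2.2 := by
    have hm : Continuous fun w : Vd d × Vd d × Vd d => ((w.2.1 - w.1, w.2.2) : Vd d × Vd d) := by
      fun_prop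
    simpa [Function.comp_def] using cont_dotR.comp hm
  have h2 : Continuous fun w : Vd d × Vd d × Vd d => circAe ε A w.1 w.2.1 := by
    have hm : Continuous fun w : Vd d × Vd d × Vd d => ((w.1, w.2.1) : Vd d × Vd d) := by fun_prop
    simpa [Function.comp_def] using (cont_circAe hA ε).comp hm
  have h3 : Continuous fun w : Vd d × Vd d × Vd d => f ((ε / 2) • (w.1 + w.2.1), w.2.2) := by
    have hm : Continuous fun w : Vd d × Vd d × Vd d =>
        (((ε / 2) • (w.1 + w.2.1), w.2.2) : Vd d × Vd d) := by fun_prop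
    simpa [Function.comp_def] using hf.comp hm
  have h4 : Continuous fun w : Vd d × Vd d × Vd d => (starRingEnd ℂ) (φ w.1) :=
    Complex.continuous_conj.comp (hφ.comp continuous_fst)
  have h5 : Continuous fun w : Vd d × Vd d × Vd d => ψ w.2.1 :=
    hψ.comp (continuous_fst.comp continuous_snd)
  have e1 : Continuous fun w : Vd d × Vd d × Vd d =>
      Complex.exp (-Complex.I * (dotR (w.2.1 - w.1) w.2.2 : ℝ)) := by fun_prop
  have e2 : Continuous fun w : Vd d × Vd d × Vd d =>
      Complex.exp (-Complex.I * lam * (circAe ε A w.1 w.2.1 : ℝ)) := by fun_prop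
  exact (((e1.mul e2).mul h3).mul h4).mul h5

section Wrappers
variable {α β : Type*} [MeasureSpace α] [MeasureSpace β]
  [SFinite (volume : Measure α)] [SFinite (volume : Measure β)]

lemma int_int {g : α → β → ℂ} (h : Integrable (fun z : α × β => g z.1 z.2)) :
    (∫ x, ∫ y, g x y) = ∫ z : α × β, g z.1 z.2 :=
  integral_integral h

lemma int_swap {g : α → β → ℂ} (h : Integrable (fun z : α × β => g z.1 z.2)) :
    (∫ x, ∫ y, g x y) = ∫ y, ∫ x, g x y :=
  integral_integral_swap h

lemma int_prod (g : α × β → ℂ) (h : Integrable g) :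
    (∫ z : α × β, g z) = ∫ x, ∫ y, g (x, y) :=
  integral_prod g h

lemma int_prod_left {g : α × β → ℂ} (h : Integrable g) :
    Integrable fun x => ∫ y, g (x, y) :=
  h.integral_prod_left

end Wrappers

end St5

set_option maxHeartbeats 1000000 in
/-- Expectation values of magnetic pseudodifferential operators are given by pairing the
symbol with the magnetic Wigner transform:
`⟨φ, Op^A_{ε,λ}(f)ψ⟩ = (2πε)^{-d} ∫ f(X) W^A_{ε,λ}(φ,ψ)(X) dX`. -/
theorem statement5 (d : ℕ) (hd : 1 ≤ d) (ε : ℝ) (hε : 0 < ε) (lam : ℝ)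
    (A : Vd d → Vd d) (hA : ∀ l, CPol fun x : Vd d => A x l)
    (f : SchwartzMap (Vd d × Vd d) ℂ) (φ ψ : SchwartzMap (Vd d) ℂ) :
    Integrable (fun x : Vd d => (starRingEnd ℂ) (φ x) * mOp ε lam A (⇑f) (⇑ψ) x) ∧
    Integrable (fun X : Vd d × Vd d => f X * mWig ε lam A (⇑φ) (⇑ψ) X) ∧
    (∫ x : Vd d, (starRingEnd ℂ) (φ x) * mOp ε lam A (⇑f) (⇑ψ) x)
      = (((2 * Real.pi * ε) ^ d)⁻¹ : ℝ) *
          ∫ X : Vd d × Vd d, f X * mWig ε lam A (⇑φ) (⇑ψ) X := by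
  classical
  have hAc : Continuous A := continuous_pi fun l => (hA l).1.continuous
  set F : Vd d → Vd d → Vd d → ℂ := St5.coreF ε lam A (⇑f) (⇑φ) (⇑ψ) with hFdef
  -- decay constants
  obtain ⟨Cf, hCf0, hCf⟩ := St5.schwartz_decay' f (d + 1)
  have hCf2 : ∀ X : Vd d × Vd d, ‖f X‖ ≤ Cf * ((1 + ‖X.2‖) ^ (d + 1))⁻¹ := by
    intro X
    refine (hCf X).trans (mul_le_mul_of_nonneg_left ?_ hCf0)
    exact inv_anti₀ (by positivity)
      (pow_le_pow_left₀ (by positivity) (by linarith [norm_snd_le X]) _)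
  obtain ⟨Cφ, hCφ0, hCφ⟩ := St5.schwartz_decay' φ (2 * (d + 1))
  obtain ⟨Cψ, hCψ0, hCψ⟩ := St5.schwartz_decay' ψ (2 * (d + 1))
  set C : ℝ := Cf * Cφ * Cψ with hCdef
  have hC0 : 0 ≤ C := by positivity
  -- master pointwise bound
  have hbnd : ∀ x y η : Vd d, ‖F x y η‖ ≤
      C * (((1 + ‖x‖) ^ (2 * (d + 1)))⁻¹ * ((1 + ‖y‖) ^ (2 * (d + 1)))⁻¹ *
        ((1 + ‖η‖) ^ (d + 1))⁻¹) := by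
    intro x y η
    rw [hFdef, St5.norm_coreF]
    have h1 : ‖f ((ε / 2) • (x + y), η)‖ ≤ Cf * ((1 + ‖η‖) ^ (d + 1))⁻¹ := hCf2 _
    calc ‖f ((ε / 2) • (x + y), η)‖ * ‖φ x‖ * ‖ψ y‖
        ≤ (Cf * ((1 + ‖η‖) ^ (d + 1))⁻¹) * (Cφ * ((1 + ‖x‖) ^ (2 * (d + 1)))⁻¹) *
          (Cψ * ((1 + ‖y‖) ^ (2 * (d + 1)))⁻¹) := by
          exact mul_le_mul (mul_le_mul h1 (hCφ x) (norm_nonneg _) (by positivity)) (hCψ y)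
            (norm_nonneg _) (by positivity)
    _ = _ := by rw [hCdef]; ring
  have hbnd1 : ∀ x y η : Vd d, ‖F x y η‖ ≤
      C * (((1 + ‖x‖) ^ (d + 1))⁻¹ * ((1 + ‖y‖) ^ (d + 1))⁻¹ * ((1 + ‖η‖) ^ (d + 1))⁻¹) := by
    intro x y η
    refine (hbnd x y η).trans (mul_le_mul_of_nonneg_left ?_ hC0)
    have h1 := St5.pw_mono (by omega : d + 1 ≤ 2 * (d + 1)) x
    have h2 := St5.pw_mono (by omega : d + 1 ≤ 2 * (d + 1)) y
    exact mul_le_mul (mul_le_mul h1 h2 (by positivity) (by positivity)) le_rfl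
      (by positivity) (by positivity)
  -- integrability of the weight
  have hP1 : Integrable (fun v : Vd d => ((1 + ‖v‖) ^ (d + 1))⁻¹) :=
    St5.integrable_pw (by omega)
  set Ip : ℝ := ∫ p : Vd d, ((1 + ‖p‖) ^ (d + 1))⁻¹ with hIpdef
  have hIp0 : 0 ≤ Ip := integral_nonneg fun p => by positivity
  -- continuity of the core
  have hFcont : Continuous fun w : Vd d × Vd d × Vd d => F w.1 w.2.1 w.2.2 := by
    rw [hFdef]
    exact St5.cont_coreF hAc f.continuous φ.continuous ψ.continuous
  -- integrability in the last variable
  have hW0 : ∀ x y : Vd d, Integrable fun η => F x y η := by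
    intro x y
    have hc : Continuous fun η => F x y η := by
      have hm : Continuous fun η : Vd d => ((x, (y, η)) : Vd d × Vd d × Vd d) := by fun_prop
      simpa [Function.comp_def] using hFcont.comp hm
    refine ((hP1.const_mul
      (C * ((1 + ‖x‖) ^ (2 * (d + 1)))⁻¹ * ((1 + ‖y‖) ^ (2 * (d + 1)))⁻¹)).mono'
      hc.aestronglyMeasurable (Filter.Eventually.of_forall fun η => ?_))
    calc ‖F x y η‖ ≤ _ := hbnd x y η
    _ = C * ((1 + ‖x‖) ^ (2 * (d + 1)))⁻¹ * ((1 + ‖y‖) ^ (2 * (d + 1)))⁻¹ *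
        ((1 + ‖η‖) ^ (d + 1))⁻¹ := by ring
  -- triple integrability
  have hW1 : Integrable (fun w : Vd d × Vd d × Vd d => F w.1 w.2.1 w.2.2) := by
    have hdom : Integrable (fun w : Vd d × Vd d × Vd d =>
        (C * ((1 + ‖w.1‖) ^ (d + 1))⁻¹) *
          (((1 + ‖w.2.1‖) ^ (d + 1))⁻¹ * ((1 + ‖w.2.2‖) ^ (d + 1))⁻¹)) :=
      (hP1.const_mul C).mul_prod (hP1.mul_prod hP1)
    refine hdom.mono' hFcont.aestronglyMeasurable (Filter.Eventually.of_forall fun w => ?_)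
    calc ‖F w.1 w.2.1 w.2.2‖ ≤ _ := hbnd1 w.1 w.2.1 w.2.2
    _ = (C * ((1 + ‖w.1‖) ^ (d + 1))⁻¹) *
        (((1 + ‖w.2.1‖) ^ (d + 1))⁻¹ * ((1 + ‖w.2.2‖) ^ (d + 1))⁻¹) := by ring
  have hW2 : ∀ x : Vd d, Integrable (fun z : Vd d × Vd d => F x z.1 z.2) := by
    intro x
    have hc : Continuous fun z : Vd d × Vd d => F x z.1 z.2 := by
      have hm : Continuous fun z : Vd d × Vd d => ((x, (z.1, z.2)) : Vd d × Vd d × Vd d) := by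
        fun_prop
      simpa [Function.comp_def] using hFcont.comp hm
    have hdom : Integrable (fun z : Vd d × Vd d =>
        (C * ((1 + ‖x‖) ^ (2 * (d + 1)))⁻¹ * ((1 + ‖z.1‖) ^ (d + 1))⁻¹) *
          ((1 + ‖z.2‖) ^ (d + 1))⁻¹) :=
      (hP1.const_mul (C * ((1 + ‖x‖) ^ (2 * (d + 1)))⁻¹)).mul_prod hP1
    refine hdom.mono' hc.aestronglyMeasurable (Filter.Eventually.of_forall fun z => ?_)
    have h2 := St5.pw_mono (by omega : d + 1 ≤ 2 * (d + 1)) z.1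
    calc ‖F x z.1 z.2‖ ≤ _ := hbnd x z.1 z.2
    _ ≤ C * (((1 + ‖x‖) ^ (2 * (d + 1)))⁻¹ * ((1 + ‖z.1‖) ^ (d + 1))⁻¹ *
        ((1 + ‖z.2‖) ^ (d + 1))⁻¹) := by
        refine mul_le_mul_of_nonneg_left ?_ hC0
        exact mul_le_mul (mul_le_mul le_rfl h2 (by positivity) (by positivity)) le_rfl
          (by positivity) (by positivity)
    _ = (C * ((1 + ‖x‖) ^ (2 * (d + 1)))⁻¹ * ((1 + ‖z.1‖) ^ (d + 1))⁻¹) *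
        ((1 + ‖z.2‖) ^ (d + 1))⁻¹ := by ring
  -- bound on the Wigner-side integrand
  have hHbnd : ∀ w : (Vd d × Vd d) × Vd d,
      ‖F (ε⁻¹ • w.1.1 - (2:ℝ)⁻¹ • w.2) (ε⁻¹ • w.1.1 + (2:ℝ)⁻¹ • w.2) w.1.2‖ ≤
        (C * (max 1 (ε / 2)) ^ (d + 1)) *
          (((1 + ‖w.1.1‖) ^ (d + 1))⁻¹ * ((1 + ‖w.1.2‖) ^ (d + 1))⁻¹ *
            ((1 + ‖w.2‖) ^ (d + 1))⁻¹) := by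
    rintro ⟨⟨q, p⟩, y⟩
    simp only []
    set a : Vd d := ε⁻¹ • q - (2:ℝ)⁻¹ • y with ha
    set b : Vd d := ε⁻¹ • q + (2:ℝ)⁻¹ • y with hb
    have hab : a + b = (2 * ε⁻¹) • q := by rw [ha, hb]; module
    have hba : b - a = y := by rw [ha, hb]; module
    have h2p := St5.two_point a b (d + 1) ((2 * ε⁻¹) • q) y
      (by rw [← hab]; exact norm_add_le _ _) (by rw [← hba, add_comm]; exact norm_sub_le _ _)
    have hsc := St5.scale_bound (k := d + 1) hε q
    calc ‖F a b p‖ ≤ _ := hbnd a b p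
    _ ≤ C * ((((1 + ‖(2 * ε⁻¹) • q‖) ^ (d + 1))⁻¹ * ((1 + ‖y‖) ^ (d + 1))⁻¹) *
        ((1 + ‖p‖) ^ (d + 1))⁻¹) := by
        refine mul_le_mul_of_nonneg_left (mul_le_mul_of_nonneg_right h2p (by positivity)) hC0
    _ ≤ C * ((((max 1 (ε / 2)) ^ (d + 1) * ((1 + ‖q‖) ^ (d + 1))⁻¹) *
        ((1 + ‖y‖) ^ (d + 1))⁻¹) * ((1 + ‖p‖) ^ (d + 1))⁻¹) := by
        refine mul_le_mul_of_nonneg_left (mul_le_mul_of_nonneg_right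
          (mul_le_mul_of_nonneg_right hsc (by positivity)) (by positivity)) hC0
    _ = _ := by ring
  -- integrability of the Wigner-side integrand on the product
  have hW3 : Integrable (fun w : (Vd d × Vd d) × Vd d =>
      F (ε⁻¹ • w.1.1 - (2:ℝ)⁻¹ • w.2) (ε⁻¹ • w.1.1 + (2:ℝ)⁻¹ • w.2) w.1.2) := by
    have hc : Continuous fun w : (Vd d × Vd d) × Vd d =>
        F (ε⁻¹ • w.1.1 - (2:ℝ)⁻¹ • w.2) (ε⁻¹ • w.1.1 + (2:ℝ)⁻¹ • w.2) w.1.2 := by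
      have hm : Continuous fun w : (Vd d × Vd d) × Vd d =>
          ((ε⁻¹ • w.1.1 - (2:ℝ)⁻¹ • w.2, (ε⁻¹ • w.1.1 + (2:ℝ)⁻¹ • w.2, w.1.2)) :
            Vd d × Vd d × Vd d) := by fun_prop
      simpa [Function.comp_def] using hFcont.comp hm
    have hdom : Integrable (fun w : (Vd d × Vd d) × Vd d =>
        ((C * (max 1 (ε / 2)) ^ (d + 1)) *
          (((1 + ‖w.1.1‖) ^ (d + 1))⁻¹ * ((1 + ‖w.1.2‖) ^ (d + 1))⁻¹)) *
          ((1 + ‖w.2‖) ^ (d + 1))⁻¹) :=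
      ((hP1.mul_prod hP1).const_mul _).mul_prod hP1
    refine hdom.mono' hc.aestronglyMeasurable (Filter.Eventually.of_forall fun w => ?_)
    exact (hHbnd w).trans_eq (by ring)
  have hW4 : ∀ q : Vd d, Integrable (fun z : Vd d × Vd d =>
      F (ε⁻¹ • q - (2:ℝ)⁻¹ • z.2) (ε⁻¹ • q + (2:ℝ)⁻¹ • z.2) z.1) := by
    intro q
    have hc : Continuous fun z : Vd d × Vd d =>
        F (ε⁻¹ • q - (2:ℝ)⁻¹ • z.2) (ε⁻¹ • q + (2:ℝ)⁻¹ • z.2) z.1 := by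
      have hm : Continuous fun z : Vd d × Vd d =>
          ((ε⁻¹ • q - (2:ℝ)⁻¹ • z.2, (ε⁻¹ • q + (2:ℝ)⁻¹ • z.2, z.1)) :
            Vd d × Vd d × Vd d) := by fun_prop
      simpa [Function.comp_def] using hFcont.comp hm
    have hdom : Integrable (fun z : Vd d × Vd d =>
        ((C * (max 1 (ε / 2)) ^ (d + 1)) * ((1 + ‖q‖) ^ (d + 1))⁻¹ *
          ((1 + ‖z.1‖) ^ (d + 1))⁻¹) * ((1 + ‖z.2‖) ^ (d + 1))⁻¹) :=
      (hP1.const_mul _).mul_prod hP1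
    refine hdom.mono' hc.aestronglyMeasurable (Filter.Eventually.of_forall fun z => ?_)
    exact (hHbnd ((q, z.1), z.2)).trans_eq (by ring)
  -- bound for the function integrated in the last variable
  have hIbnd : ∀ a b : Vd d, ‖∫ p, F a b p‖ ≤
      (C * Ip) * (((1 + ‖a‖) ^ (2 * (d + 1)))⁻¹ * ((1 + ‖b‖) ^ (2 * (d + 1)))⁻¹) := by
    intro a b
    have h1 : ‖∫ p, F a b p‖ ≤ ∫ p, ‖F a b p‖ := norm_integral_le_integral_norm _
    have h2 : (∫ p, ‖F a b p‖) ≤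
        ∫ p : Vd d, (C * (((1 + ‖a‖) ^ (2 * (d + 1)))⁻¹ * ((1 + ‖b‖) ^ (2 * (d + 1)))⁻¹)) *
          ((1 + ‖p‖) ^ (d + 1))⁻¹ := by
      refine integral_mono (hW0 a b).norm (hP1.const_mul _) fun p => ?_
      calc ‖F a b p‖ ≤ _ := hbnd a b p
      _ = (C * (((1 + ‖a‖) ^ (2 * (d + 1)))⁻¹ * ((1 + ‖b‖) ^ (2 * (d + 1)))⁻¹)) *
          ((1 + ‖p‖) ^ (d + 1))⁻¹ := by ring
    rw [integral_const_mul] at h2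
    calc ‖∫ p, F a b p‖ ≤ _ := h1.trans h2
    _ = _ := by rw [← hIpdef]; ring
  -- the two remaining product integrabilities
  have hW5 : Integrable (fun z : Vd d × Vd d =>
      ∫ p, F (z.1 - (2:ℝ)⁻¹ • z.2) (z.1 + (2:ℝ)⁻¹ • z.2) p) := by
    have hm : AEStronglyMeasurable (fun w : (Vd d × Vd d) × Vd d =>
        F (w.1.1 - (2:ℝ)⁻¹ • w.1.2) (w.1.1 + (2:ℝ)⁻¹ • w.1.2) w.2)
        ((volume : Measure (Vd d × Vd d)).prod volume) := by
      have hmc : Continuous fun w : (Vd d × Vd d) × Vd d =>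
          ((w.1.1 - (2:ℝ)⁻¹ • w.1.2, (w.1.1 + (2:ℝ)⁻¹ • w.1.2, w.2)) :
            Vd d × Vd d × Vd d) := by fun_prop
      exact (by simpa [Function.comp_def] using hFcont.comp hmc : Continuous _
        ).aestronglyMeasurable
    have hdom : Integrable (fun z : Vd d × Vd d =>
        ((C * Ip) * ((1 + ‖z.1‖) ^ (d + 1))⁻¹) * ((1 + ‖z.2‖) ^ (d + 1))⁻¹) :=
      (hP1.const_mul _).mul_prod hP1
    refine hdom.mono' hm.integral_prod_right' (Filter.Eventually.of_forall fun z => ?_)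
    set a : Vd d := z.1 - (2:ℝ)⁻¹ • z.2 with ha
    set b : Vd d := z.1 + (2:ℝ)⁻¹ • z.2 with hb
    have hn1 : ‖z.1‖ ≤ ‖a‖ + ‖b‖ := by
      have hid : z.1 = (2:ℝ)⁻¹ • (a + b) := by rw [ha, hb]; module
      rw [hid, norm_smul, Real.norm_eq_abs]
      have := norm_add_le a b
      have h0a := norm_nonneg a; have h0b := norm_nonneg b
      rw [abs_of_pos (by norm_num : (0:ℝ) < (2:ℝ)⁻¹)]
      nlinarith
    have hn2 : ‖z.2‖ ≤ ‖a‖ + ‖b‖ := by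
      have hid : z.2 = b - a := by rw [ha, hb]; module
      rw [hid, add_comm]; exact norm_sub_le _ _
    have h2p := St5.two_point a b (d + 1) z.1 z.2 hn1 hn2
    calc ‖∫ p, F a b p‖ ≤ _ := hIbnd a b
    _ ≤ (C * Ip) * (((1 + ‖z.1‖) ^ (d + 1))⁻¹ * ((1 + ‖z.2‖) ^ (d + 1))⁻¹) :=
        mul_le_mul_of_nonneg_left h2p (by positivity)
    _ = _ := by ring
  have hW6 : Integrable (fun z : Vd d × Vd d => ∫ p, F z.2 (z.2 + z.1) p) := by
    have hm : AEStronglyMeasurable (fun w : (Vd d × Vd d) × Vd d =>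
        F w.1.2 (w.1.2 + w.1.1) w.2)
        ((volume : Measure (Vd d × Vd d)).prod volume) := by
      have hmc : Continuous fun w : (Vd d × Vd d) × Vd d =>
          ((w.1.2, (w.1.2 + w.1.1, w.2)) : Vd d × Vd d × Vd d) := by fun_prop
      exact (by simpa [Function.comp_def] using hFcont.comp hmc : Continuous _
        ).aestronglyMeasurable
    have hdom : Integrable (fun z : Vd d × Vd d =>
        ((C * Ip) * ((1 + ‖z.1‖) ^ (d + 1))⁻¹) * ((1 + ‖z.2‖) ^ (d + 1))⁻¹) :=
      (hP1.const_mul _).mul_prod hP1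
    refine hdom.mono' hm.integral_prod_right' (Filter.Eventually.of_forall fun z => ?_)
    have hn1 : ‖z.2‖ ≤ ‖z.2‖ + ‖z.2 + z.1‖ := le_add_of_nonneg_right (norm_nonneg _)
    have hn2 : ‖z.1‖ ≤ ‖z.2‖ + ‖z.2 + z.1‖ := by
      have hid : z.1 = (z.2 + z.1) - z.2 := by module
      calc ‖z.1‖ = ‖(z.2 + z.1) - z.2‖ := by rw [← hid]
      _ ≤ ‖z.2 + z.1‖ + ‖z.2‖ := norm_sub_le _ _
      _ = ‖z.2‖ + ‖z.2 + z.1‖ := by ring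
    have h2p := St5.two_point z.2 (z.2 + z.1) (d + 1) z.2 z.1 hn1 hn2
    calc ‖∫ p, F z.2 (z.2 + z.1) p‖ ≤ _ := hIbnd z.2 (z.2 + z.1)
    _ ≤ (C * Ip) * (((1 + ‖z.2‖) ^ (d + 1))⁻¹ * ((1 + ‖z.1‖) ^ (d + 1))⁻¹) :=
        mul_le_mul_of_nonneg_left h2p (by positivity)
    _ = _ := by ring
  -- pointwise identification of the left-hand side
  have key1 : ∀ x : Vd d, (starRingEnd ℂ) (φ x) * mOp ε lam A (⇑f) (⇑ψ) x
      = ((((2 * Real.pi) ^ d)⁻¹ : ℝ) : ℂ) * ∫ z : Vd d × Vd d, F x z.1 z.2 := by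
    intro x
    simp only [mOp]
    rw [mul_left_comm]
    congr 1
    rw [← integral_const_mul]
    have hy : ∀ y : Vd d, ((starRingEnd ℂ) (φ x) * ∫ η : Vd d,
        Complex.exp (-Complex.I * dotR (y - x) η) *
          Complex.exp (-Complex.I * lam * circAe ε A x y) *
          f ((ε / 2) • (x + y), η) * ψ y) = ∫ η, F x y η := by
      intro y
      rw [← integral_const_mul]
      refine integral_congr_ae (Filter.Eventually.of_forall fun η => ?_)
      rw [hFdef]; simp only [St5.coreF]; ring
    calc (∫ y, (starRingEnd ℂ) (φ x) * ∫ η : Vd d,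
          Complex.exp (-Complex.I * dotR (y - x) η) *
            Complex.exp (-Complex.I * lam * circAe ε A x y) *
            f ((ε / 2) • (x + y), η) * ψ y)
        = ∫ y, ∫ η, F x y η := integral_congr_ae (Filter.Eventually.of_forall hy)
    _ = ∫ z : Vd d × Vd d, F x z.1 z.2 := St5.int_int (g := fun (y η : Vd d) => F x y η) (hW2 x)
  -- pointwise identification of the right-hand side
  have key2 : ∀ X : Vd d × Vd d, f X * mWig ε lam A (⇑φ) (⇑ψ) X
      = ∫ y, F (ε⁻¹ • X.1 - (2:ℝ)⁻¹ • y) (ε⁻¹ • X.1 + (2:ℝ)⁻¹ • y) X.2 := by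
    intro X
    simp only [mWig]
    rw [← integral_const_mul]
    refine integral_congr_ae (Filter.Eventually.of_forall fun y => ?_)
    set a : Vd d := ε⁻¹ • X.1 - (2:ℝ)⁻¹ • y with ha
    set b : Vd d := ε⁻¹ • X.1 + (2:ℝ)⁻¹ • y with hb
    have hba : b - a = y := by rw [ha, hb]; module
    have habf : (ε / 2) • (a + b) = X.1 := by
      have h1 : a + b = (2 * ε⁻¹) • X.1 := by rw [ha, hb]; module
      have h2 : (ε / 2) * (2 * ε⁻¹) = 1 := by field_simp
      rw [h1, smul_smul, h2, one_smul]
    rw [hFdef]; simp only [St5.coreF]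
    rw [hba, habf]
    have hX : (X.1, X.2) = X := Prod.mk.eta
    rw [hX]
    ring
  -- the substitution chain
  have key3 : (∫ X : Vd d × Vd d, ∫ y,
        F (ε⁻¹ • X.1 - (2:ℝ)⁻¹ • y) (ε⁻¹ • X.1 + (2:ℝ)⁻¹ • y) X.2)
      = (ε ^ d : ℝ) • ∫ w : Vd d × Vd d × Vd d, F w.1 w.2.1 w.2.2 := by
    have hsmul : ∀ u : Vd d, ε⁻¹ • (ε • u) = u := fun u => by
      rw [smul_smul, inv_mul_cancel₀ hε.ne', one_smul]
    calc (∫ X : Vd d × Vd d, ∫ y,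
          F (ε⁻¹ • X.1 - (2:ℝ)⁻¹ • y) (ε⁻¹ • X.1 + (2:ℝ)⁻¹ • y) X.2)
        = ∫ q, ∫ p, ∫ y, F (ε⁻¹ • q - (2:ℝ)⁻¹ • y) (ε⁻¹ • q + (2:ℝ)⁻¹ • y) p :=
          St5.int_prod _ (St5.int_prod_left hW3)
    _ = ∫ q, ∫ y, ∫ p, F (ε⁻¹ • q - (2:ℝ)⁻¹ • y) (ε⁻¹ • q + (2:ℝ)⁻¹ • y) p := by
        refine integral_congr_ae (Filter.Eventually.of_forall fun q => ?_)
        exact St5.int_swap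
          (g := fun (p y : Vd d) => F (ε⁻¹ • q - (2:ℝ)⁻¹ • y) (ε⁻¹ • q + (2:ℝ)⁻¹ • y) p) (hW4 q)
    _ = (ε ^ d : ℝ) • ∫ u, ∫ y, ∫ p,
          F (ε⁻¹ • (ε • u) - (2:ℝ)⁻¹ • y) (ε⁻¹ • (ε • u) + (2:ℝ)⁻¹ • y) p := by
        have h := Measure.integral_comp_smul (volume : Measure (Vd d))
          (fun q => ∫ y, ∫ p, F (ε⁻¹ • q - (2:ℝ)⁻¹ • y) (ε⁻¹ • q + (2:ℝ)⁻¹ • y) p) ε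
        rw [Module.finrank_fin_fun, abs_of_pos (by positivity)] at h
        rw [h, smul_smul, mul_inv_cancel₀ (by positivity), one_smul]
    _ = (ε ^ d : ℝ) • ∫ u, ∫ y, ∫ p, F (u - (2:ℝ)⁻¹ • y) (u + (2:ℝ)⁻¹ • y) p := by
        simp_rw [hsmul]
    _ = (ε ^ d : ℝ) • ∫ y, ∫ u, ∫ p, F (u - (2:ℝ)⁻¹ • y) (u + (2:ℝ)⁻¹ • y) p := by
        congr 1
        exact St5.int_swap
          (g := fun (u y : Vd d) => ∫ p, F (u - (2:ℝ)⁻¹ • y) (u + (2:ℝ)⁻¹ • y) p) hW5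
    _ = (ε ^ d : ℝ) • ∫ y, ∫ x, ∫ p, F x (x + y) p := by
        congr 1
        refine integral_congr_ae (Filter.Eventually.of_forall fun y => ?_)
        have h1 : ∀ x : Vd d, (x + (2:ℝ)⁻¹ • y) - (2:ℝ)⁻¹ • y = x := fun x => by module
        have h2 : ∀ x : Vd d, (x + (2:ℝ)⁻¹ • y) + (2:ℝ)⁻¹ • y = x + y := fun x => by module
        calc (∫ u, ∫ p, F (u - (2:ℝ)⁻¹ • y) (u + (2:ℝ)⁻¹ • y) p)
            = ∫ x, ∫ p, F ((x + (2:ℝ)⁻¹ • y) - (2:ℝ)⁻¹ • y) ((x + (2:ℝ)⁻¹ • y) + (2:ℝ)⁻¹ • y) p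
            := (integral_add_right_eq_self
              (fun u => ∫ p, F (u - (2:ℝ)⁻¹ • y) (u + (2:ℝ)⁻¹ • y) p) ((2:ℝ)⁻¹ • y)).symm
        _ = ∫ x, ∫ p, F x (x + y) p := by
            refine integral_congr_ae (Filter.Eventually.of_forall fun x => ?_)
            simp only [h1, h2]
    _ = (ε ^ d : ℝ) • ∫ x, ∫ y, ∫ p, F x (x + y) p := by
        congr 1
        exact St5.int_swap (g := fun (y x : Vd d) => ∫ p, F x (x + y) p) hW6
    _ = (ε ^ d : ℝ) • ∫ x, ∫ y, ∫ p, F x y p := by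
        congr 1
        refine integral_congr_ae (Filter.Eventually.of_forall fun x => ?_)
        exact integral_add_left_eq_self (fun w => ∫ p, F x w p) x
    _ = (ε ^ d : ℝ) • ∫ x, ∫ z : Vd d × Vd d, F x z.1 z.2 := by
        congr 1
        refine integral_congr_ae (Filter.Eventually.of_forall fun x => ?_)
        exact St5.int_int (g := fun (y p : Vd d) => F x y p) (hW2 x)
    _ = (ε ^ d : ℝ) • ∫ w : Vd d × Vd d × Vd d, F w.1 w.2.1 w.2.2 := by
        congr 1
        exact St5.int_int (g := fun (x : Vd d) (z : Vd d × Vd d) => F x z.1 z.2) hW1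
  -- the two integrability claims
  have claim1fun : (fun x : Vd d => (starRingEnd ℂ) (φ x) * mOp ε lam A (⇑f) (⇑ψ) x)
      = fun x => ((((2 * Real.pi) ^ d)⁻¹ : ℝ) : ℂ) * ∫ z : Vd d × Vd d, F x z.1 z.2 :=
    funext key1
  have claim2fun : (fun X : Vd d × Vd d => f X * mWig ε lam A (⇑φ) (⇑ψ) X)
      = fun X => ∫ y, F (ε⁻¹ • X.1 - (2:ℝ)⁻¹ • y) (ε⁻¹ • X.1 + (2:ℝ)⁻¹ • y) X.2 :=
    funext key2
  have claim1 : Integrable (fun x : Vd d => (starRingEnd ℂ) (φ x) * mOp ε lam A (⇑f) (⇑ψ) x) := by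
    rw [claim1fun]
    exact (St5.int_prod_left hW1).const_mul _
  have claim2 : Integrable (fun X : Vd d × Vd d => f X * mWig ε lam A (⇑φ) (⇑ψ) X) := by
    rw [claim2fun]
    exact St5.int_prod_left hW3
  refine ⟨claim1, claim2, ?_⟩
  have hconst : ((((2 * Real.pi) ^ d)⁻¹ : ℝ) : ℂ)
      = ((((2 * Real.pi * ε) ^ d)⁻¹ : ℝ) : ℂ) * ((ε ^ d : ℝ) : ℂ) := by
    rw [← Complex.ofReal_mul]
    congr 1
    have hB : (ε : ℝ) ^ d ≠ 0 := pow_ne_zero _ hε.ne'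
    rw [mul_pow, mul_inv]
    field_simp
    ring
  calc (∫ x : Vd d, (starRingEnd ℂ) (φ x) * mOp ε lam A (⇑f) (⇑ψ) x)
      = ∫ x : Vd d, ((((2 * Real.pi) ^ d)⁻¹ : ℝ) : ℂ) * ∫ z : Vd d × Vd d, F x z.1 z.2 := by
        rw [claim1fun]
  _ = ((((2 * Real.pi) ^ d)⁻¹ : ℝ) : ℂ) * ∫ x, ∫ z : Vd d × Vd d, F x z.1 z.2 :=
      integral_const_mul _ _
  _ = ((((2 * Real.pi) ^ d)⁻¹ : ℝ) : ℂ) * ∫ w : Vd d × Vd d × Vd d, F w.1 w.2.1 w.2.2 := by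
      rw [St5.int_int (g := fun (x : Vd d) (z : Vd d × Vd d) => F x z.1 z.2) hW1]
  _ = ((((2 * Real.pi * ε) ^ d)⁻¹ : ℝ) : ℂ) *
        (((ε ^ d : ℝ) : ℂ) * ∫ w : Vd d × Vd d × Vd d, F w.1 w.2.1 w.2.2) := by
      rw [hconst]; ring
  _ = ((((2 * Real.pi * ε) ^ d)⁻¹ : ℝ) : ℂ) *
        ((ε ^ d : ℝ) • ∫ w : Vd d × Vd d × Vd d, F w.1 w.2.1 w.2.2) := by
      rw [Complex.real_smul]
  _ = ((((2 * Real.pi * ε) ^ d)⁻¹ : ℝ) : ℂ) * ∫ X : Vd d × Vd d, ∫ y,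
        F (ε⁻¹ • X.1 - (2:ℝ)⁻¹ • y) (ε⁻¹ • X.1 + (2:ℝ)⁻¹ • y) X.2 := by
      rw [key3]
  _ = ((((2 * Real.pi * ε) ^ d)⁻¹ : ℝ) : ℂ) *
        ∫ X : Vd d × Vd d, f X * mWig ε lam A (⇑φ) (⇑ψ) X := by
      rw [claim2fun]
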